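/- The graph F4 satisfies γ_e(F4) < γ(F4). -/

import Mathlib

open SimpleGraph

/-- `D` is a dominating set of `G`. -/
def IsDomSet {V : Type*} (G : SimpleGraph V) (D : Finset V) : Prop :=
  ∀ v : V, v ∉ D → ∃ u ∈ D, G.Adj u v

/-- The domination number of `G`. -/
noncomputable def domNum {V : Type*} (G : SimpleGraph V) [Fintype V] : ℕ :=
  sInf {n | ∃ D : Finset V, IsDomSet G D ∧ D.card = n}

open Classical in
/-- `D` contains exactly one endvertex of a path between `u` and `v`. -/
def endCond {V : Type*} (D : Finset V) (u v : V) : Prop :=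
  if u = v then u ∈ D else ((u ∈ D ∧ v ∉ D) ∨ (u ∉ D ∧ v ∈ D))

/-- `dist_{(G,D)}(u,v)`: the minimum length of a path in `G` between `u` and `v` such
that `D` contains exactly one endvertex and no internal vertex of the path;
`⊤` if no such path exists. -/
noncomputable def eDist {V : Type*} (G : SimpleGraph V) (D : Finset V) (u v : V) : ℕ∞ :=
  ⨅ (p : {p : G.Walk u v // p.IsPath ∧ endCond D u v ∧
      ∀ w ∈ p.support, w ≠ u → w ≠ v → w ∉ D}), (p.1.length : ℕ∞)

/-- `(1/2)^(d-1)` for `d : ℕ∞`, with `(1/2)^∞ = 0`. -/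
noncomputable def halfPow (d : ℕ∞) : ℝ :=
  if d = ⊤ then 0 else 2 * (1 / 2 : ℝ) ^ d.toNat

/-- The weight `w_{(G,D)}(u)`. -/
noncomputable def expWeight {V : Type*} (G : SimpleGraph V) (D : Finset V) (u : V) : ℝ :=
  ∑ v ∈ D, halfPow (eDist G D u v)

/-- `D` is an exponential dominating set of `G`. -/
def IsExpDomSet {V : Type*} (G : SimpleGraph V) (D : Finset V) : Prop :=
  ∀ u : V, 1 ≤ expWeight G D u

/-- The exponential domination number of `G`. -/
noncomputable def expDomNum {V : Type*} (G : SimpleGraph V) [Fintype V] : ℕ :=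
  sInf {n | ∃ D : Finset V, IsExpDomSet G D ∧ D.card = n}

/-- `G` is `H`-free: `G` has no induced subgraph isomorphic to `H`. -/
def Free {V W : Type*} (G : SimpleGraph V) (H : SimpleGraph W) : Prop :=
  ¬ Nonempty (H ↪g G)

/-- The graph on `Fin n` with the given edge list. -/
def graphOfList (n : ℕ) (l : List (Fin n × Fin n)) : SimpleGraph (Fin n) :=
  SimpleGraph.fromRel (fun a b => (a, b) ∈ l)

/-- The bull `B`. -/
def bull : SimpleGraph (Fin 5) := graphOfList 5 [(0,1),(1,2),(0,2),(0,3),(1,4)]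
/-- The diamond `D` (`K₄` minus an edge). -/
def diamond : SimpleGraph (Fin 4) := graphOfList 4 [(0,1),(0,2),(0,3),(1,2),(1,3)]
/-- The complete graph `K₄`. -/
def K4 : SimpleGraph (Fin 4) := ⊤
/-- The complete bipartite graph `K_{2,3}` with parts `{0,1}` and `{2,3,4}`. -/
def K23 : SimpleGraph (Fin 5) := graphOfList 5 [(0,2),(0,3),(0,4),(1,2),(1,3),(1,4)]
/-- The 2×3 grid `P₂ □ P₃`. -/
def P2P3 : SimpleGraph (Fin 2 × Fin 3) := (pathGraph 2) □ (pathGraph 3)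
/-- The path on 7 vertices. -/
def P7 : SimpleGraph (Fin 7) := pathGraph 7
/-- The cycle on 7 vertices. -/
def C7 : SimpleGraph (Fin 7) := cycleGraph 7
/-- `F₁`: the path `0-1-2` with pendant vertices `3,4,5` attached to `0,1,2`. -/
def F1 : SimpleGraph (Fin 6) := graphOfList 6 [(0,1),(1,2),(0,3),(1,4),(2,5)]
/-- `F₂`: a 4-cycle with a pendant path on 3 new vertices. -/
def F2 : SimpleGraph (Fin 7) := graphOfList 7 [(0,1),(1,2),(2,3),(3,0),(0,4),(4,5),(5,6)]
/-- `F₃`: a 4-cycle `0-1-2-3` and a 5-cycle `1-2-4-5-6` sharing exactly the edge `1-2`. -/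
def F3 : SimpleGraph (Fin 7) := graphOfList 7 [(0,1),(1,2),(2,3),(3,0),(2,4),(4,5),(5,6),(6,1)]
/-- `F₄`: two 4-cycles sharing exactly the vertex `0`. -/
def F4 : SimpleGraph (Fin 7) := graphOfList 7 [(0,1),(1,2),(2,3),(3,0),(0,4),(4,5),(5,6),(6,0)]
/-- `F₅`: vertices `u=0, v₁=1, v₂=2, w=3, a=4, b=5, z=6`. -/
def F5 : SimpleGraph (Fin 7) := graphOfList 7 [(0,1),(0,2),(1,3),(2,3),(1,4),(4,5),(5,2),(3,6)]


instance : DecidableRel F4.Adj := fun a b =>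
  decidable_of_iff' _ (SimpleGraph.fromRel_adj _ a b)

instance (D : Finset (Fin 7)) : Decidable (IsDomSet F4 D) := by
  unfold IsDomSet; infer_instance

lemma halfPow_nonneg (d : ℕ∞) : 0 ≤ halfPow d := by
  unfold halfPow; split <;> positivity

lemma endCond_of_ne {V : Type*} (D : Finset V) {u v : V} (h : u ≠ v)
    (h2 : (u ∈ D ∧ v ∉ D) ∨ (u ∉ D ∧ v ∈ D)) : endCond D u v := by
  unfold endCond; rw [if_neg h]; exact h2

lemma endCond_of_eq {V : Type*} {D : Finset V} {u : V} (h : u ∈ D) : endCond D u u := by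
  unfold endCond; rw [if_pos rfl]; exact h

lemma eDist_le {V : Type*} (G : SimpleGraph V) (D : Finset V) {u v : V}
    (p : G.Walk u v) (hp : p.IsPath) (hc : endCond D u v)
    (hi : ∀ w ∈ p.support, w ≠ u → w ≠ v → w ∉ D) :
    eDist G D u v ≤ (p.length : ℕ∞) :=
  iInf_le (fun q : {p : G.Walk u v // p.IsPath ∧ endCond D u v ∧
      ∀ w ∈ p.support, w ≠ u → w ≠ v → w ∉ D} => (q.1.length : ℕ∞)) ⟨p, hp, hc, hi⟩

lemma halfPow_ge {V : Type*} {G : SimpleGraph V} {D : Finset V} {u v : V} {k : ℕ}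
    (h : eDist G D u v ≤ (k : ℕ∞)) :
    2 * (1/2 : ℝ)^k ≤ halfPow (eDist G D u v) := by
  have hne : eDist G D u v ≠ ⊤ := by
    intro ht; rw [ht] at h; exact absurd h (by simp)
  unfold halfPow
  rw [if_neg hne]
  have hk : (eDist G D u v).toNat ≤ k := by
    lift eDist G D u v to ℕ using hne with d
    simpa using h
  have := pow_le_pow_of_le_one (by norm_num : (0:ℝ) ≤ 1/2) (by norm_num) hk
  linarith

set_option maxRecDepth 20000 in
/-- `γₑ(F₄) < γ(F₄)`. -/
theorem expDomNum_F4_lt_domNum_F4 : expDomNum F4 < domNum F4 := by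
  set D : Finset (Fin 7) := {2, 5} with hD
  have hsum : ∀ u : Fin 7, expWeight F4 D u =
      halfPow (eDist F4 D u 2) + halfPow (eDist F4 D u 5) := by
    intro u
    unfold expWeight
    rw [hD, Finset.sum_pair (by decide : (2 : Fin 7) ≠ 5)]
  have hexp : IsExpDomSet F4 D := by
    intro u
    rw [hsum u]
    fin_cases u
    · show (1:ℝ) ≤ halfPow (eDist F4 D 0 2) + halfPow (eDist F4 D 0 5)
      have h2 : eDist F4 D 0 2 ≤ (2 : ℕ∞) := by
        have := eDist_le F4 D (Walk.cons (by decide : F4.Adj 0 1) (Walk.cons (by decide : F4.Adj 1 2) Walk.nil))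
          (by rw [Walk.isPath_def]; decide) (endCond_of_ne D (by decide) (by decide)) (by decide)
        simpa using this
      have h5 : eDist F4 D 0 5 ≤ (2 : ℕ∞) := by
        have := eDist_le F4 D (Walk.cons (by decide : F4.Adj 0 6) (Walk.cons (by decide : F4.Adj 6 5) Walk.nil))
          (by rw [Walk.isPath_def]; decide) (endCond_of_ne D (by decide) (by decide)) (by decide)
        simpa using this
      have H0 := halfPow_ge h2
      norm_num at H0
      have H1 := halfPow_ge h5
      norm_num at H1
      linarith
    · show (1:ℝ) ≤ halfPow (eDist F4 D 1 2) + halfPow (eDist F4 D 1 5)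
      have h2 : eDist F4 D 1 2 ≤ (1 : ℕ∞) := by
        have := eDist_le F4 D (Walk.cons (by decide : F4.Adj 1 2) Walk.nil)
          (by rw [Walk.isPath_def]; decide) (endCond_of_ne D (by decide) (by decide)) (by decide)
        simpa using this
      have H0 := halfPow_ge h2
      norm_num at H0
      have H9 := halfPow_nonneg (eDist F4 D 1 5)
      linarith
    · show (1:ℝ) ≤ halfPow (eDist F4 D 2 2) + halfPow (eDist F4 D 2 5)
      have h2 : eDist F4 D 2 2 ≤ (0 : ℕ∞) := by
        have := eDist_le F4 D (Walk.nil : F4.Walk 2 2)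
          (by rw [Walk.isPath_def]; decide) (endCond_of_eq (by decide : (2:Fin 7) ∈ D)) (by decide)
        simpa using this
      have H0 := halfPow_ge h2
      norm_num at H0
      have H9 := halfPow_nonneg (eDist F4 D 2 5)
      linarith
    · show (1:ℝ) ≤ halfPow (eDist F4 D 3 2) + halfPow (eDist F4 D 3 5)
      have h2 : eDist F4 D 3 2 ≤ (1 : ℕ∞) := by
        have := eDist_le F4 D (Walk.cons (by decide : F4.Adj 3 2) Walk.nil)
          (by rw [Walk.isPath_def]; decide) (endCond_of_ne D (by decide) (by decide)) (by decide)
        simpa using this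
      have H0 := halfPow_ge h2
      norm_num at H0
      have H9 := halfPow_nonneg (eDist F4 D 3 5)
      linarith
    · show (1:ℝ) ≤ halfPow (eDist F4 D 4 2) + halfPow (eDist F4 D 4 5)
      have h5 : eDist F4 D 4 5 ≤ (1 : ℕ∞) := by
        have := eDist_le F4 D (Walk.cons (by decide : F4.Adj 4 5) Walk.nil)
          (by rw [Walk.isPath_def]; decide) (endCond_of_ne D (by decide) (by decide)) (by decide)
        simpa using this
      have H0 := halfPow_ge h5
      norm_num at H0
      have H9 := halfPow_nonneg (eDist F4 D 4 2)
      linarith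
    · show (1:ℝ) ≤ halfPow (eDist F4 D 5 2) + halfPow (eDist F4 D 5 5)
      have h5 : eDist F4 D 5 5 ≤ (0 : ℕ∞) := by
        have := eDist_le F4 D (Walk.nil : F4.Walk 5 5)
          (by rw [Walk.isPath_def]; decide) (endCond_of_eq (by decide : (5:Fin 7) ∈ D)) (by decide)
        simpa using this
      have H0 := halfPow_ge h5
      norm_num at H0
      have H9 := halfPow_nonneg (eDist F4 D 5 2)
      linarith
    · show (1:ℝ) ≤ halfPow (eDist F4 D 6 2) + halfPow (eDist F4 D 6 5)
      have h5 : eDist F4 D 6 5 ≤ (1 : ℕ∞) := by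
        have := eDist_le F4 D (Walk.cons (by decide : F4.Adj 6 5) Walk.nil)
          (by rw [Walk.isPath_def]; decide) (endCond_of_ne D (by decide) (by decide)) (by decide)
        simpa using this
      have H0 := halfPow_ge h5
      norm_num at H0
      have H9 := halfPow_nonneg (eDist F4 D 6 2)
      linarith
  have h1 : expDomNum F4 ≤ 2 :=
    Nat.sInf_le ⟨D, hexp, by decide⟩
  have hdom : ∀ E : Finset (Fin 7), IsDomSet F4 E → 3 ≤ E.card := by decide
  have h2 : 3 ≤ domNum F4 := by
    apply le_csInf
    · exact ⟨3, ({0, 2, 5} : Finset (Fin 7)), by decide, by decide⟩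
    · rintro n ⟨E, hE, rfl⟩
      exact hdom E hE
  omega
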